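/- Let $v_2$ be an integer with $v_2 > 18$ and $3 \nmid v_2$, let $a_j \in \mathbb{C}$ for integers $j$ with $-\lfloor v_2/3 \rfloor - 3 \le j \le -4$, and define $\varphi_1 = T^6$ and $\varphi_2 = T^9 + T^{v_2 - 9} + \sum_{j = -\lfloor v_2/3 \rfloor - 3}^{-4} a_j T^{2 v_2 + 3j}$ in $\mathbb{C}[[T]]$. Let $\Lambda$ be the value set of differentials of $(\varphi_1, \varphi_2)$. Then the set $\Lambda \setminus \langle 6, 9, v_2 \rangle$ has at least $5$ elements. -/

import Mathlib

open PowerSeries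

/-- Substitution of two one-variable power series (with zero constant term) into a
two-variable power series, defined coefficientwise. -/
noncomputable def sub2 (φ₁ φ₂ : PowerSeries ℂ) (h : MvPowerSeries (Fin 2) ℂ) :
    PowerSeries ℂ :=
  PowerSeries.mk fun n =>
    ∑ p ∈ Finset.range (n + 1) ×ˢ Finset.range (n + 1),
      MvPowerSeries.coeff (Finsupp.single 0 p.1 + Finsupp.single 1 p.2) h *
        PowerSeries.coeff n (φ₁ ^ p.1 * φ₂ ^ p.2)

/-- The value semigroup of a parameterization `(φ₁, φ₂)`. -/
noncomputable def valueSemigroup (φ₁ φ₂ : PowerSeries ℂ) : Set ℕ :=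
  {n : ℕ | ∃ h : MvPowerSeries (Fin 2) ℂ,
    sub2 φ₁ φ₂ h ≠ 0 ∧ (sub2 φ₁ φ₂ h).order = (n : ℕ∞)}

/-- The value set of differentials of a parameterization `(φ₁, φ₂)`. -/
noncomputable def diffValues (φ₁ φ₂ : PowerSeries ℂ) : Set ℕ :=
  {n : ℕ | ∃ A B : MvPowerSeries (Fin 2) ℂ,
    sub2 φ₁ φ₂ A * derivativeFun φ₁ + sub2 φ₁ φ₂ B * derivativeFun φ₂ ≠ 0 ∧
    (sub2 φ₁ φ₂ A * derivativeFun φ₁ + sub2 φ₁ φ₂ B * derivativeFun φ₂).order + 1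
      = (n : ℕ∞)}

namespace LG692

noncomputable def S2 (v2 : ℕ) (a : ℤ → ℂ) : PowerSeries ℂ :=
  ∑ j ∈ Finset.Icc (-((v2 / 3 : ℕ) : ℤ) - 3) (-4),
    PowerSeries.C (a j) * PowerSeries.X ^ (2 * (v2 : ℤ) + 3 * j).toNat

noncomputable def psi (v2 : ℕ) (a : ℤ → ℂ) : PowerSeries ℂ :=
  PowerSeries.X ^ (v2 - 9) + S2 v2 a

noncomputable def phi2 (v2 : ℕ) (a : ℤ → ℂ) : PowerSeries ℂ :=
  PowerSeries.X ^ 9 + psi v2 a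

def E (v2 : ℕ) (j : ℤ) : ℕ := (2 * (v2 : ℤ) + 3 * j).toNat

section basic

variable (v2 : ℕ) (a : ℤ → ℂ) (h18 : 18 < v2) (h3 : ¬ (3 ∣ v2))

/-- J0 -/
def J0 (v2 : ℕ) : ℤ := -((v2 / 3 : ℕ) : ℤ) - 3

lemma hE {v2 : ℕ} (h18 : 18 < v2) (h3 : ¬ (3 ∣ v2)) {j : ℤ} (h1 : J0 v2 ≤ j) (h4 : j ≤ -4) :
    ((E v2 j : ℤ) = 2 * (v2 : ℤ) + 3 * j) ∧ v2 - 8 ≤ E v2 j ∧ E v2 j ≤ 2 * v2 - 12 := by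
  unfold E J0 at *
  omega

lemma phi2_eq (v2 : ℕ) (a : ℤ → ℂ) :
    phi2 v2 a = PowerSeries.X ^ 9 + PowerSeries.X ^ (v2 - 9) + S2 v2 a := by
  rw [phi2, psi, add_assoc]

lemma coeff_S2_zero {v2 : ℕ} (a : ℤ → ℂ) {m : ℕ}
    (h : ∀ j : ℤ, J0 v2 ≤ j → j ≤ -4 → a j ≠ 0 → m ≠ E v2 j) :
    PowerSeries.coeff m (S2 v2 a) = 0 := by
  rw [S2, map_sum]
  refine Finset.sum_eq_zero fun j hj => ?_
  rw [Finset.mem_Icc] at hj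
  rw [coeff_C_mul, coeff_X_pow]
  by_cases ha : a j = 0
  · simp [ha]
  · have hne : m ≠ (2 * (v2 : ℤ) + 3 * j).toNat := h j hj.1 hj.2 ha
    rw [if_neg hne, mul_zero]

lemma coeff_S2_E {v2 : ℕ} (h18 : 18 < v2) (h3 : ¬ (3 ∣ v2)) (a : ℤ → ℂ) {j : ℤ}
    (h1 : J0 v2 ≤ j) (h4 : j ≤ -4) :
    PowerSeries.coeff (E v2 j) (S2 v2 a) = a j := by
  rw [S2, map_sum]
  rw [Finset.sum_eq_single j]
  · rw [coeff_C_mul, coeff_X_pow]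
    simp [E]
  · intro i hi hij
    rw [Finset.mem_Icc] at hi
    rw [coeff_C_mul, coeff_X_pow, if_neg, mul_zero]
    intro hEq
    have hEi := (hE h18 h3 hi.1 hi.2).1
    have hEj := (hE h18 h3 h1 h4).1
    apply hij
    omega
  · intro hnot
    exact absurd (Finset.mem_Icc.2 ⟨h1, h4⟩) hnot

lemma coeff_S2_low {v2 : ℕ} (h18 : 18 < v2) (h3 : ¬ (3 ∣ v2)) (a : ℤ → ℂ) {m : ℕ}
    (hm : m < v2 - 8) : PowerSeries.coeff m (S2 v2 a) = 0 := by
  apply coeff_S2_zero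
  intro j h1 h4 _
  have := (hE h18 h3 h1 h4).2.1
  omega

lemma coeff_phi2 (v2 : ℕ) (a : ℤ → ℂ) (m : ℕ) :
    PowerSeries.coeff m (phi2 v2 a) =
      (if m = 9 then 1 else 0) + (if m = v2 - 9 then 1 else 0)
        + PowerSeries.coeff m (S2 v2 a) := by
  rw [phi2_eq, map_add, map_add, coeff_X_pow, coeff_X_pow]

lemma coeff_phi2_low {v2 : ℕ} (h18 : 18 < v2) (h3 : ¬ (3 ∣ v2)) (a : ℤ → ℂ) {m : ℕ}
    (hm : m < v2 - 9) :
    PowerSeries.coeff m (phi2 v2 a) = if m = 9 then 1 else 0 := by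
  rw [coeff_phi2, coeff_S2_low h18 h3 a (show m < v2 - 8 by omega), add_zero,
    if_neg (show m ≠ v2 - 9 by omega), add_zero]

lemma coeff_phi2_v9 {v2 : ℕ} (h18 : 18 < v2) (h3 : ¬ (3 ∣ v2)) (a : ℤ → ℂ) :
    PowerSeries.coeff (v2 - 9) (phi2 v2 a) = 1 := by
  rw [coeff_phi2, if_neg (by omega), if_pos rfl, coeff_S2_zero]
  · ring
  · intro j h1 h4 _
    have := (hE h18 h3 h1 h4).2.1
    omega

/-- generic vanishing of coefficients of a product -/
lemma coeff_mul_vanish {f g : PowerSeries ℂ} {N M : ℕ}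
    (hf : ∀ m, m < N → PowerSeries.coeff m f = 0)
    (hg : ∀ m, m < M → PowerSeries.coeff m g = 0) :
    ∀ m, m < N + M → PowerSeries.coeff m (f * g) = 0 := by
  intro m hm
  rw [coeff_mul]
  refine Finset.sum_eq_zero fun p hp => ?_
  rw [Finset.HasAntidiagonal.mem_antidiagonal] at hp
  rcases lt_or_ge p.1 N with h | h
  · rw [hf p.1 h, zero_mul]
  · rw [hg p.2 (by omega), mul_zero]

lemma coeff_psi_low {v2 : ℕ} (h18 : 18 < v2) (h3 : ¬ (3 ∣ v2)) (a : ℤ → ℂ) {m : ℕ}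
    (hm : m < v2 - 9) : PowerSeries.coeff m (psi v2 a) = 0 := by
  rw [psi, map_add, coeff_X_pow, if_neg (by omega), coeff_S2_low h18 h3 a (by omega), add_zero]

lemma coeff_psisq_low {v2 : ℕ} (h18 : 18 < v2) (h3 : ¬ (3 ∣ v2)) (a : ℤ → ℂ) {m : ℕ}
    (hm : m < 2 * v2 - 18) : PowerSeries.coeff m (psi v2 a * psi v2 a) = 0 := by
  refine coeff_mul_vanish (N := v2 - 9) (M := v2 - 9) ?_ ?_ m (by omega) <;>
    exact fun m hm => coeff_psi_low h18 h3 a hm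

lemma coeff_SS_low {v2 : ℕ} (h18 : 18 < v2) (h3 : ¬ (3 ∣ v2)) (a : ℤ → ℂ) {m : ℕ}
    (hm : m < 2 * v2 - 16) : PowerSeries.coeff m (S2 v2 a * S2 v2 a) = 0 := by
  refine coeff_mul_vanish (N := v2 - 8) (M := v2 - 8) ?_ ?_ m (by omega) <;>
    exact fun m hm => coeff_S2_low h18 h3 a hm

lemma coeff_psicube_low {v2 : ℕ} (h18 : 18 < v2) (h3 : ¬ (3 ∣ v2)) (a : ℤ → ℂ) {m : ℕ}
    (hm : m < 3 * v2 - 27) :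
    PowerSeries.coeff m (psi v2 a * psi v2 a * psi v2 a) = 0 := by
  refine coeff_mul_vanish (N := 2 * v2 - 18) (M := v2 - 9) ?_ ?_ m (by omega)
  · exact fun m hm => coeff_psisq_low h18 h3 a hm
  · exact fun m hm => coeff_psi_low h18 h3 a hm

lemma coeff_psisq_top {v2 : ℕ} (h18 : 18 < v2) (h3 : ¬ (3 ∣ v2)) (a : ℤ → ℂ) :
    PowerSeries.coeff (2 * v2 - 18) (psi v2 a * psi v2 a) = 1 := by
  have hexp : psi v2 a * psi v2 a =
      PowerSeries.X ^ (v2 - 9) * PowerSeries.X ^ (v2 - 9)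
        + PowerSeries.X ^ (v2 - 9) * S2 v2 a + S2 v2 a * PowerSeries.X ^ (v2 - 9)
        + S2 v2 a * S2 v2 a := by
    rw [psi]; ring
  have t1 : PowerSeries.coeff (2 * v2 - 18)
      ((PowerSeries.X : PowerSeries ℂ) ^ (v2 - 9) * PowerSeries.X ^ (v2 - 9)) = 1 := by
    rw [← pow_add, coeff_X_pow, if_pos (by omega)]
  have t2 : PowerSeries.coeff (2 * v2 - 18)
      ((PowerSeries.X : PowerSeries ℂ) ^ (v2 - 9) * S2 v2 a) = 0 := by
    rw [coeff_X_pow_mul', if_pos (by omega), show 2 * v2 - 18 - (v2 - 9) = v2 - 9 by omega,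
      coeff_S2_low h18 h3 a (by omega)]
  have t3 : PowerSeries.coeff (2 * v2 - 18)
      (S2 v2 a * (PowerSeries.X : PowerSeries ℂ) ^ (v2 - 9)) = 0 := by
    rw [coeff_mul_X_pow', if_pos (by omega), show 2 * v2 - 18 - (v2 - 9) = v2 - 9 by omega,
      coeff_S2_low h18 h3 a (by omega)]
  rw [hexp, map_add, map_add, map_add, t1, t2, t3, coeff_SS_low h18 h3 a (by omega)]
  ring

end basic


lemma coeff_dF (f : PowerSeries ℂ) (n : ℕ) :
    PowerSeries.coeff n (derivativeFun f) = PowerSeries.coeff (n + 1) f * (n + 1) :=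
  coeff_derivative f n

lemma dXpow (n : ℕ) :
    derivativeFun ((PowerSeries.X : PowerSeries ℂ) ^ (n + 1)) =
      PowerSeries.C ((n : ℂ) + 1) * PowerSeries.X ^ n := by
  ext m
  rw [coeff_dF, coeff_C_mul, coeff_X_pow, coeff_X_pow]
  by_cases h : m = n
  · subst h; simp
  · rw [if_neg h, if_neg (by omega), zero_mul, mul_zero]

lemma deriv_sq (f : PowerSeries ℂ) :
    derivativeFun (f ^ 2) = PowerSeries.C 2 * (f * derivativeFun f) := by
  rw [pow_two, derivativeFun_mul,
    show (PowerSeries.C 2) = (2 : PowerSeries ℂ) from map_ofNat _ 2]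
  simp only [smul_eq_mul]
  ring

lemma deriv_cube (f : PowerSeries ℂ) :
    derivativeFun (f ^ 3) = PowerSeries.C 3 * (f ^ 2 * derivativeFun f) := by
  have h2 : f ^ 3 = f ^ 2 * f := by ring
  rw [h2, derivativeFun_mul, deriv_sq,
    show (PowerSeries.C 3) = (2 : PowerSeries ℂ) + 1 by
      rw [show (PowerSeries.C 3) = (3 : PowerSeries ℂ) from map_ofNat _ 3]; norm_num,
    show (PowerSeries.C 2) = (2 : PowerSeries ℂ) from map_ofNat _ 2]
  simp only [smul_eq_mul]
  ring

/-- the normal form `C α * (X^5 * H) + C β * (X^6 * derivativeFun H)` -/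
noncomputable def Nform (α β : ℂ) (H : PowerSeries ℂ) : PowerSeries ℂ :=
  PowerSeries.C α * (PowerSeries.X ^ 5 * H)
    + PowerSeries.C β * (PowerSeries.X ^ 6 * derivativeFun H)

lemma coeff_Nform (α β : ℂ) (H : PowerSeries ℂ) {k : ℕ} (hk : 6 ≤ k) :
    PowerSeries.coeff k (Nform α β H)
      = (α + β * ((k - 5 : ℕ) : ℂ)) * PowerSeries.coeff (k - 5) H := by
  rw [Nform, map_add, coeff_C_mul, coeff_C_mul, coeff_X_pow_mul', coeff_X_pow_mul',
    if_pos (by omega : 5 ≤ k), if_pos (by omega : 6 ≤ k), coeff_dF,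
    show k - 6 + 1 = k - 5 by omega]
  have hc : ((k - 6 : ℕ) : ℂ) = ((k - 5 : ℕ) : ℂ) - 1 := by
    have h : k - 5 = (k - 6) + 1 := by omega
    rw [h]; push_cast; ring
  rw [hc]; ring

lemma coeff_Nform_low (α β : ℂ) (H : PowerSeries ℂ) {k : ℕ} (hk : k < 6) :
    PowerSeries.coeff k (Nform α β H)
      = if k = 5 then α * PowerSeries.coeff 0 H else 0 := by
  rw [Nform, map_add, coeff_C_mul, coeff_C_mul, coeff_X_pow_mul', coeff_X_pow_mul',
    if_neg (by omega : ¬ 6 ≤ k)]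
  by_cases h5 : k = 5
  · subst h5; simp
  · rw [if_neg (by omega : ¬ 5 ≤ k), if_neg h5]; ring

lemma sub2_add (φ₁ φ₂ : PowerSeries ℂ) (g h : MvPowerSeries (Fin 2) ℂ) :
    sub2 φ₁ φ₂ (g + h) = sub2 φ₁ φ₂ g + sub2 φ₁ φ₂ h := by
  ext n
  simp only [sub2, coeff_mk, map_add, add_mul, Finset.sum_add_distrib]

lemma finsupp_pair (d : Fin 2 →₀ ℕ) (i j : ℕ) :
    (Finsupp.single (0 : Fin 2) i + Finsupp.single 1 j = d) ↔ i = d 0 ∧ j = d 1 := by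
  constructor
  · intro h
    constructor
    · have := congrArg (fun f => f 0) h
      simpa [Finsupp.single_apply] using this
    · have := congrArg (fun f => f 1) h
      simpa [Finsupp.single_apply] using this
  · rintro ⟨hi, hj⟩
    ext t
    fin_cases t <;> simp [Finsupp.single_apply, hi, hj]

lemma coeff_prodpow_vanish {φ₂ : PowerSeries ℂ}
    (hφ₂ : ∀ m, m < 9 → PowerSeries.coeff m φ₂ = 0) (p q n : ℕ) (h : n < p ∨ n < q) :
    PowerSeries.coeff n (((PowerSeries.X : PowerSeries ℂ) ^ 6) ^ p * φ₂ ^ q) = 0 := by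
  have h1 : ∀ m, m < 6 * p →
      PowerSeries.coeff m (((PowerSeries.X : PowerSeries ℂ) ^ 6) ^ p) = 0 := by
    intro m hm
    rw [← pow_mul, coeff_X_pow, if_neg (by omega)]
  have h2 : ∀ q' : ℕ, ∀ m, m < 9 * q' → PowerSeries.coeff m (φ₂ ^ q') = 0 := by
    intro q'
    induction q' with
    | zero => intro m hm; omega
    | succ q' ih =>
      intro m hm
      rw [pow_succ]
      exact coeff_mul_vanish (N := 9 * q') (M := 9) ih hφ₂ m (by omega)
  have h2 := h2 q
  exact coeff_mul_vanish h1 h2 n (by omega)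

lemma sub2_monomial {φ₂ : PowerSeries ℂ}
    (hφ₂ : ∀ m, m < 9 → PowerSeries.coeff m φ₂ = 0) (d : Fin 2 →₀ ℕ) (r : ℂ) :
    sub2 ((PowerSeries.X : PowerSeries ℂ) ^ 6) φ₂ (MvPowerSeries.monomial d r)
      = PowerSeries.C r * ((PowerSeries.X : PowerSeries ℂ) ^ 6) ^ (d 0) * φ₂ ^ (d 1) := by
  ext n
  rw [sub2, coeff_mk]
  have hcm : ∀ p : ℕ × ℕ,
      MvPowerSeries.coeff (Finsupp.single 0 p.1 + Finsupp.single 1 p.2)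
        (MvPowerSeries.monomial d r)
      = if p.1 = d 0 ∧ p.2 = d 1 then r else 0 := by
    intro p
    rw [MvPowerSeries.coeff_monomial]
    by_cases h : p.1 = d 0 ∧ p.2 = d 1
    · rw [if_pos ((finsupp_pair d p.1 p.2).2 h), if_pos h]
    · rw [if_neg (fun hc => h ((finsupp_pair d p.1 p.2).1 hc)), if_neg h]
  by_cases hd : d 0 ≤ n ∧ d 1 ≤ n
  · rw [Finset.sum_eq_single_of_mem (d 0, d 1)]
    · rw [hcm, if_pos ⟨rfl, rfl⟩, mul_assoc, coeff_C_mul]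
    · rw [Finset.mem_product, Finset.mem_range, Finset.mem_range]
      exact ⟨by omega, by omega⟩
    · intro p _ hp
      rw [hcm, if_neg, zero_mul]
      intro ⟨h1, h2⟩
      exact hp (Prod.ext h1 h2)
  · rw [Finset.sum_eq_zero, mul_assoc, coeff_C_mul,
      coeff_prodpow_vanish hφ₂ (d 0) (d 1) n (by omega), mul_zero]
    intro p hp
    rw [Finset.mem_product, Finset.mem_range, Finset.mem_range] at hp
    rw [hcm, if_neg, zero_mul]
    intro ⟨h1, h2⟩
    omega

lemma gamma_rep {v2 m : ℕ} (h : m ∈ AddSubmonoid.closure ({6, 9, v2} : Set ℕ)) :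
    ∃ x y z : ℕ, m = 6 * x + 9 * y + v2 * z := by
  induction h using AddSubmonoid.closure_induction with
  | mem n hn =>
    rcases hn with h | h | h
    · exact ⟨1, 0, 0, by omega⟩
    · exact ⟨0, 1, 0, by omega⟩
    · exact ⟨0, 0, 1, by simp at h; omega⟩
  | zero => exact ⟨0, 0, 0, by omega⟩
  | add x y _ _ hx hy =>
    obtain ⟨x1, y1, z1, h1⟩ := hx
    obtain ⟨x2, y2, z2, h2⟩ := hy
    exact ⟨x1 + x2, y1 + y2, z1 + z2, by rw [h1, h2]; ring⟩

lemma ngA {v2 m : ℕ} (h18 : 18 < v2) (h3 : ¬ (3 ∣ v2)) (hmod : m % 3 = v2 % 3)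
    (hm : m < v2 ∨ m = v2 + 3) :
    m ∉ (AddSubmonoid.closure ({6, 9, v2} : Set ℕ) : Set ℕ) := by
  intro hmem
  obtain ⟨x, y, z, hrep⟩ := gamma_rep hmem
  match z with
  | 0 => omega
  | 1 => omega
  | 2 => omega
  | 3 => omega
  | (n + 4) =>
    have h4 : v2 * 4 ≤ v2 * (n + 4) := Nat.mul_le_mul_left v2 (by omega)
    omega

lemma ngB {v2 m : ℕ} (h18 : 18 < v2) (h3 : ¬ (3 ∣ v2)) (hmod : m % 3 = (2 * v2) % 3)
    (hm : m < 2 * v2 ∨ m = 2 * v2 + 3) :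
    m ∉ (AddSubmonoid.closure ({6, 9, v2} : Set ℕ) : Set ℕ) := by
  intro hmem
  obtain ⟨x, y, z, hrep⟩ := gamma_rep hmem
  match z with
  | 0 => omega
  | 1 => omega
  | 2 => omega
  | 3 => omega
  | 4 => omega
  | (n + 5) =>
    have h4 : v2 * 5 ≤ v2 * (n + 5) := Nat.mul_le_mul_left v2 (by omega)
    omega

lemma order_witness {F : PowerSeries ℂ} {n : ℕ}
    (h0 : ∀ k, k < n → PowerSeries.coeff k F = 0) (hn : PowerSeries.coeff n F ≠ 0) :
    F ≠ 0 ∧ F.order + 1 = ((n + 1 : ℕ) : ℕ∞) := by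
  have hord : F.order = n := order_eq_nat.2 ⟨hn, h0⟩
  constructor
  · intro h; subst h; simp at hn
  · rw [hord]
    norm_cast

section W
variable {v2 : ℕ} (a : ℤ → ℂ) (h18 : 18 < v2) (h3 : ¬ (3 ∣ v2))

lemma castsub {x y : ℕ} (h : y ≤ x) : ((x - y : ℕ) : ℂ) = (x : ℂ) - (y : ℕ) := by
  push_cast [Nat.cast_sub h]; ring

include h18 h3 in
lemma Fw1_low : ∀ k, k < v2 - 4 → PowerSeries.coeff k (Nform 9 (-1) (phi2 v2 a)) = 0 := by
  intro k hk
  rcases lt_or_ge k 6 with h6 | h6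
  · rw [coeff_Nform_low _ _ _ h6]
    by_cases h5 : k = 5
    · rw [if_pos h5, coeff_phi2_low h18 h3 a (by omega), if_neg (by omega), mul_zero]
    · rw [if_neg h5]
  · rw [coeff_Nform _ _ _ h6]
    by_cases h14 : k = 14
    · subst h14
      norm_num
    · rw [coeff_phi2_low h18 h3 a (by omega), if_neg (by omega), mul_zero]

include h18 h3 in
lemma Fw1_top : PowerSeries.coeff (v2 - 4) (Nform 9 (-1) (phi2 v2 a)) = 18 - (v2 : ℂ) := by
  rw [coeff_Nform _ _ _ (by omega), show v2 - 4 - 5 = v2 - 9 by omega, coeff_phi2_v9 h18 h3,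
    castsub (by omega : 9 ≤ v2)]
  ring

lemma cast_v2_ne {x : ℕ} (h : (v2 : ℕ) ≠ x) : (v2 : ℂ) ≠ (x : ℕ) := by
  exact_mod_cast h

/-- G for the Ψ witness -/
noncomputable def Gser (v2 : ℕ) (a : ℤ → ℂ) : PowerSeries ℂ :=
  phi2 v2 a ^ 3 - PowerSeries.C 3 * (PowerSeries.X ^ 18 * phi2 v2 a)

omit h18 h3 in
lemma Gser_eq : Gser v2 a = PowerSeries.C (-2) * PowerSeries.X ^ 27
    + PowerSeries.C 3 * (PowerSeries.X ^ 9 * (psi v2 a * psi v2 a))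
    + psi v2 a * psi v2 a * psi v2 a := by
  rw [Gser, phi2,
    show (PowerSeries.C 3) = (3 : PowerSeries ℂ) from map_ofNat _ 3,
    show (PowerSeries.C (-2)) = -(2 : PowerSeries ℂ) by
      rw [map_neg, map_ofNat]]
  ring

include h18 h3 in
lemma G_low : ∀ m, m < 2 * v2 - 9 →
    PowerSeries.coeff m (Gser v2 a) = if m = 27 then -2 else 0 := by
  intro m hm
  rw [Gser_eq, map_add, map_add, coeff_C_mul, coeff_C_mul, coeff_X_pow,
    coeff_X_pow_mul', coeff_psicube_low h18 h3 a (by omega)]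
  by_cases h9 : 9 ≤ m
  · rw [if_pos h9, coeff_psisq_low h18 h3 a (by omega), mul_zero, add_zero, add_zero]
    by_cases h27 : m = 27
    · rw [if_pos h27, if_pos h27]; ring
    · rw [if_neg h27, if_neg h27]; ring
  · rw [if_neg h9, if_neg (by omega), if_neg (by omega), mul_zero, mul_zero]; ring

include h18 h3 in
lemma G_top : PowerSeries.coeff (2 * v2 - 9) (Gser v2 a) = 3 := by
  rw [Gser_eq, map_add, map_add, coeff_C_mul, coeff_C_mul, coeff_X_pow,
    coeff_X_pow_mul', if_pos (by omega : 9 ≤ 2 * v2 - 9),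
    show 2 * v2 - 9 - 9 = 2 * v2 - 18 by omega, coeff_psisq_top h18 h3 a,
    coeff_psicube_low h18 h3 a (by omega), if_neg (by omega : ¬ 2 * v2 - 9 = 27)]
  ring

include h18 h3 in
lemma Fw5_low : ∀ k, k < 2 * v2 - 4 →
    PowerSeries.coeff k (Nform 27 (-1) (Gser v2 a)) = 0 := by
  intro k hk
  rcases lt_or_ge k 6 with h6 | h6
  · rw [coeff_Nform_low _ _ _ h6]
    by_cases h5 : k = 5
    · rw [if_pos h5, G_low a h18 h3 0 (by omega), if_neg (by omega), mul_zero]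
    · rw [if_neg h5]
  · rw [coeff_Nform _ _ _ h6, G_low a h18 h3 (k - 5) (by omega)]
    by_cases h32 : k = 32
    · subst h32
      norm_num
    · rw [if_neg (by omega), mul_zero]

include h18 h3 in
lemma Fw5_top : PowerSeries.coeff (2 * v2 - 4) (Nform 27 (-1) (Gser v2 a))
    = (36 - 2 * (v2 : ℂ)) * 3 := by
  rw [coeff_Nform _ _ _ (by omega), show 2 * v2 - 4 - 5 = 2 * v2 - 9 by omega,
    G_top a h18 h3, castsub (by omega : 9 ≤ 2 * v2)]
  push_cast
  ring

end W
section Case1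
variable {v2 : ℕ} {a : ℤ → ℂ} (h18 : 18 < v2) (h3 : ¬ (3 ∣ v2))
variable {js : ℤ} (hjs1 : J0 v2 ≤ js) (hjs9 : js ≤ -9)
variable (hmin : ∀ j : ℤ, J0 v2 ≤ j → j ≤ -4 → a j ≠ 0 → js ≤ j)
variable (hP : (if js = -9 then 1 + 2 * a (-9) else a js) ≠ 0)

omit h18 h3 in
lemma coeff_S2_supp {m : ℕ} (h : PowerSeries.coeff m (S2 v2 a) ≠ 0) :
    ∃ j : ℤ, J0 v2 ≤ j ∧ j ≤ -4 ∧ a j ≠ 0 ∧ m = E v2 j := by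
  by_contra hc
  push_neg at hc
  exact h (coeff_S2_zero a (fun j h1 h4 ha => hc j h1 h4 ha))

include h18 h3 in
lemma E_mono {i j : ℤ} (hi1 : J0 v2 ≤ i) (hi4 : i ≤ -4) (hj1 : J0 v2 ≤ j) (hj4 : j ≤ -4)
    (hij : i ≤ j) : E v2 i ≤ E v2 j := by
  have h1 := (hE h18 h3 hi1 hi4).1
  have h2 := (hE h18 h3 hj1 hj4).1
  omega

include h18 h3 hjs1 hjs9 hmin in
lemma coeff_S_above {m : ℕ} (hm : m < E v2 js) : PowerSeries.coeff m (S2 v2 a) = 0 := by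
  by_contra h
  obtain ⟨j, h1, h4, ha, hme⟩ := coeff_S2_supp h
  have hj := hmin j h1 h4 ha
  have := E_mono h18 h3 hjs1 (by omega) h1 h4 hj
  omega

include h18 h3 hjs1 hjs9 hmin in
lemma coeff_SS_case1 {m : ℕ} (hm : m ≤ E v2 js + 9) :
    PowerSeries.coeff m (S2 v2 a * S2 v2 a) = 0 := by
  have hEb := (hE h18 h3 hjs1 (by omega)).2.1
  refine coeff_mul_vanish (N := E v2 js) (M := E v2 js) ?_ ?_ m (by omega)
  all_goals exact fun m hm => coeff_S_above h18 h3 hjs1 hjs9 hmin hm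

lemma phi2sq_eq (v2 : ℕ) (a : ℤ → ℂ) : phi2 v2 a ^ 2 =
    PowerSeries.X ^ 9 * PowerSeries.X ^ 9
      + PowerSeries.X ^ (v2 - 9) * PowerSeries.X ^ (v2 - 9)
      + S2 v2 a * S2 v2 a
      + PowerSeries.C 2 * (PowerSeries.X ^ 9 * PowerSeries.X ^ (v2 - 9))
      + PowerSeries.C 2 * (PowerSeries.X ^ 9 * S2 v2 a)
      + PowerSeries.C 2 * (PowerSeries.X ^ (v2 - 9) * S2 v2 a) := by
  rw [phi2_eq, show (PowerSeries.C 2) = (2 : PowerSeries ℂ) from map_ofNat _ 2]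
  ring

include h18 h3 in
lemma coeff_phi2sq (m : ℕ) : PowerSeries.coeff m (phi2 v2 a ^ 2) =
    (if m = 18 then 1 else 0) + (if m = 2 * v2 - 18 then 1 else 0)
      + PowerSeries.coeff m (S2 v2 a * S2 v2 a)
      + 2 * (if m = v2 then 1 else 0)
      + 2 * (if 9 ≤ m then PowerSeries.coeff (m - 9) (S2 v2 a) else 0)
      + 2 * (if v2 - 9 ≤ m then PowerSeries.coeff (m - (v2 - 9)) (S2 v2 a) else 0) := by
  rw [phi2sq_eq, map_add, map_add, map_add, map_add, map_add, coeff_C_mul, coeff_C_mul,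
    coeff_C_mul, ← pow_add, ← pow_add, ← pow_add, coeff_X_pow, coeff_X_pow, coeff_X_pow,
    coeff_X_pow_mul', coeff_X_pow_mul',
    show (9 : ℕ) + 9 = 18 by omega, show v2 - 9 + (v2 - 9) = 2 * v2 - 18 by omega,
    show (9 : ℕ) + (v2 - 9) = v2 by omega]

include h18 h3 hjs1 hjs9 hmin in
lemma q0 {m : ℕ} (hm : m < E v2 js + 9) (h18m : m ≠ 18) (hv2m : m ≠ v2) :
    PowerSeries.coeff m (phi2 v2 a ^ 2) = 0 := by
  have hEb := (hE h18 h3 hjs1 (by omega)).2.1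
  have hE9 : (E v2 js : ℤ) = 2 * v2 + 3 * js := (hE h18 h3 hjs1 (by omega)).1
  rw [coeff_phi2sq h18 h3, if_neg h18m, if_neg (by omega), if_neg (by omega),
    coeff_SS_case1 h18 h3 hjs1 hjs9 hmin (by omega)]
  have t5 : (if 9 ≤ m then PowerSeries.coeff (m - 9) (S2 v2 a) else 0) = 0 := by
    by_cases h9 : 9 ≤ m
    · rw [if_pos h9]
      exact coeff_S_above h18 h3 hjs1 hjs9 hmin (by omega)
    · rw [if_neg h9]
  have t6 : (if v2 - 9 ≤ m then PowerSeries.coeff (m - (v2 - 9)) (S2 v2 a) else 0) = 0 := by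
    by_cases h9 : v2 - 9 ≤ m
    · rw [if_pos h9]
      exact coeff_S_above h18 h3 hjs1 hjs9 hmin (by omega)
    · rw [if_neg h9]
  rw [t5, t6]
  ring

include h18 h3 hjs1 hjs9 hmin in
lemma qtop : PowerSeries.coeff (E v2 js + 9) (phi2 v2 a ^ 2)
    = 2 * a js + (if js = -9 then 1 else 0) := by
  have hEb := (hE h18 h3 hjs1 (by omega)).2.1
  have hE9 : (E v2 js : ℤ) = 2 * v2 + 3 * js := (hE h18 h3 hjs1 (by omega)).1
  have hE99 : (E v2 (-9) : ℤ) = 2 * v2 - 27 := by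
    have := (hE h18 h3 (j := -9) (by unfold J0; omega) (by omega)).1
    omega
  rw [coeff_phi2sq h18 h3, coeff_SS_case1 h18 h3 hjs1 hjs9 hmin (by omega),
    if_neg (by omega), if_neg (by omega : ¬ (E v2 js + 9 = v2)),
    if_pos (by omega : 9 ≤ E v2 js + 9), if_pos (by omega : v2 - 9 ≤ E v2 js + 9),
    show E v2 js + 9 - 9 = E v2 js by omega, coeff_S2_E h18 h3 a hjs1 (by omega)]
  have t6 : PowerSeries.coeff (E v2 js + 9 - (v2 - 9)) (S2 v2 a) = 0 := by
    exact coeff_S_above h18 h3 hjs1 hjs9 hmin (by omega)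
  rw [t6]
  by_cases hj9 : js = -9
  · rw [if_pos hj9, if_pos (by omega : E v2 js + 9 = 2 * v2 - 18)]
    ring
  · rw [if_neg hj9, if_neg (by
      intro hc
      have : (js : ℤ) = -9 := by omega
      exact hj9 this)]
    ring

include h18 h3 in
lemma q18 : PowerSeries.coeff 18 (phi2 v2 a ^ 2) = 1 := by
  rw [coeff_phi2sq h18 h3, if_pos rfl, if_neg (by omega), if_neg (by omega),
    coeff_SS_low h18 h3 a (by omega), if_pos (by omega)]
  have t5 : PowerSeries.coeff (18 - 9) (S2 v2 a) = 0 :=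
    coeff_S2_low h18 h3 a (by omega)
  rw [t5]
  by_cases h9 : v2 - 9 ≤ 18
  · rw [if_pos h9, coeff_S2_low h18 h3 a (by omega)]
    ring
  · rw [if_neg h9]
    ring

/-- The Θ' witness series (case 1). -/
noncomputable def Fw3 (v2 : ℕ) (a : ℤ → ℂ) : PowerSeries ℂ :=
  Nform (v2 : ℂ) (-1) (phi2 v2 a ^ 2)
    + PowerSeries.C (18 - (v2 : ℂ)) * PowerSeries.X ^ 23

omit h18 h3 in
lemma coeff_Fw3 (k : ℕ) : PowerSeries.coeff k (Fw3 v2 a)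
    = PowerSeries.coeff k (Nform (v2 : ℂ) (-1) (phi2 v2 a ^ 2))
      + (18 - (v2 : ℂ)) * (if k = 23 then 1 else 0) := by
  rw [Fw3, map_add, coeff_C_mul, coeff_X_pow]

include h18 h3 hjs1 hjs9 hmin in
lemma fw3_low : ∀ k, k < E v2 js + 14 → PowerSeries.coeff k (Fw3 v2 a) = 0 := by
  intro k hk
  have hEb := (hE h18 h3 hjs1 (by omega)).2.1
  rw [coeff_Fw3]
  rcases lt_or_ge k 6 with h6 | h6
  · rw [coeff_Nform_low _ _ _ h6, if_neg (by omega : ¬ (k = 23))]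
    by_cases h5 : k = 5
    · rw [if_pos h5, q0 h18 h3 hjs1 hjs9 hmin (by omega) (by omega) (by omega)]
      ring
    · rw [if_neg h5]; ring
  · rw [coeff_Nform _ _ _ h6]
    by_cases h23 : k = 23
    · subst h23
      rw [show (23 : ℕ) - 5 = 18 by norm_num, q18 h18 h3, if_pos rfl]
      push_cast
      ring
    · rw [if_neg h23]
      by_cases hv5 : k = v2 + 5
      · subst hv5
        rw [show v2 + 5 - 5 = v2 by omega]
        ring
      · rw [q0 h18 h3 hjs1 hjs9 hmin (by omega) (by omega) (by omega)]
        ring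

include h18 h3 hjs1 hjs9 hmin hP in
lemma fw3_top : PowerSeries.coeff (E v2 js + 14) (Fw3 v2 a) ≠ 0 := by
  have hEb := (hE h18 h3 hjs1 (by omega)).2.1
  have hE9 : (E v2 js : ℤ) = 2 * v2 + 3 * js := (hE h18 h3 hjs1 (by omega)).1
  rw [coeff_Fw3, if_neg (by omega : ¬ (E v2 js + 14 = 23)), mul_zero, add_zero,
    coeff_Nform _ _ _ (by omega), show E v2 js + 14 - 5 = E v2 js + 9 by omega,
    qtop h18 h3 hjs1 hjs9 hmin]
  apply mul_ne_zero
  · intro hc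
    have hcast : (v2 : ℂ) = ((E v2 js + 9 : ℕ) : ℂ) := by
      have : ((E v2 js + 9 : ℕ) : ℂ) = ((E v2 js + 9 : ℕ) : ℂ) := rfl
      push_cast at hc ⊢
      linear_combination hc
    have : (v2 : ℕ) = E v2 js + 9 := by exact_mod_cast hcast
    omega
  · by_cases hj9 : js = -9
    · subst hj9
      rw [if_pos rfl]
      rw [if_pos rfl] at hP
      intro hc
      apply hP
      linear_combination hc
    · rw [if_neg hj9, add_zero]
      rw [if_neg hj9] at hP
      intro hc
      rcases mul_eq_zero.mp hc with h | h
      · exact absurd h two_ne_zero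
      · exact hP h

end Case1
section Case2
variable {v2 : ℕ} {a : ℤ → ℂ} (h18 : 18 < v2) (h3 : ¬ (3 ∣ v2))

lemma coeff_sqd (f : PowerSeries ℂ) (k : ℕ) :
    PowerSeries.coeff k (f ^ 2 * derivativeFun f)
      = PowerSeries.coeff (k + 1) (f ^ 3) * (((k : ℂ)) + 1) / 3 := by
  have h := congrArg (PowerSeries.coeff k) (deriv_cube f)
  rw [coeff_dF, coeff_C_mul] at h
  field_simp
  linear_combination -h

lemma phi2cube_eq (v2 : ℕ) (a : ℤ → ℂ) : phi2 v2 a ^ 3 =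
    PowerSeries.X ^ 27
      + PowerSeries.C 3 * (PowerSeries.X ^ 18 * psi v2 a)
      + PowerSeries.C 3 * (PowerSeries.X ^ 9 * (psi v2 a * psi v2 a))
      + psi v2 a * psi v2 a * psi v2 a := by
  rw [phi2, show (PowerSeries.C 3) = (3 : PowerSeries ℂ) from map_ofNat _ 3]
  ring

include h18 h3 in
lemma coeff_cube (m : ℕ) : PowerSeries.coeff m (phi2 v2 a ^ 3) =
    (if m = 27 then 1 else 0)
      + 3 * (if 18 ≤ m then PowerSeries.coeff (m - 18) (psi v2 a) else 0)
      + 3 * (if 9 ≤ m then PowerSeries.coeff (m - 9) (psi v2 a * psi v2 a) else 0)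
      + PowerSeries.coeff m (psi v2 a * psi v2 a * psi v2 a) := by
  rw [phi2cube_eq, map_add, map_add, map_add, coeff_C_mul, coeff_C_mul,
    coeff_X_pow, coeff_X_pow_mul', coeff_X_pow_mul']

include h18 h3 in
lemma w_top : PowerSeries.coeff (2 * v2 - 9) (phi2 v2 a ^ 3) = 3 + 3 * a (-9) := by
  have hE99 : (E v2 (-9) : ℤ) = 2 * (v2 : ℤ) - 27 := by
    have := (hE h18 h3 (j := -9) (by unfold J0; omega) (by omega)).1
    omega
  have hS : PowerSeries.coeff (2 * v2 - 27) (S2 v2 a) = a (-9) := by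
    rw [show 2 * v2 - 27 = E v2 (-9) by omega]
    exact coeff_S2_E h18 h3 a (by unfold J0; omega) (by omega)
  rw [coeff_cube h18 h3, if_neg (by omega), if_pos (by omega), if_pos (by omega),
    show 2 * v2 - 9 - 18 = 2 * v2 - 27 by omega, show 2 * v2 - 9 - 9 = 2 * v2 - 18 by omega,
    coeff_psisq_top h18 h3 a, coeff_psicube_low h18 h3 a (by omega), psi, map_add,
    coeff_X_pow, if_neg (by omega), hS]
  ring

variable (hall : ∀ j : ℤ, J0 v2 ≤ j → j ≤ -9 →
  (if j = -9 then 1 + 2 * a (-9) else a j) = 0)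

include h18 h3 hall in
lemma ha9 : a (-9) = -(1/2) := by
  have h := hall (-9) (by unfold J0; omega) (by omega)
  rw [if_pos rfl] at h
  linear_combination h / 2

include h18 h3 hall in
lemma coeff_S2_case2 {m : ℕ} (hm : m < 2 * v2 - 27) :
    PowerSeries.coeff m (S2 v2 a) = 0 := by
  apply coeff_S2_zero
  intro j h1 h4 haj hme
  have hEj := (hE h18 h3 h1 h4).1
  by_cases hj : j ≤ -10
  · have := hall j h1 (by omega)
    rw [if_neg (by omega)] at this
    exact haj this
  · omega

include h18 h3 hall in
lemma coeff_psi_case2 {m : ℕ} (hm : m < 2 * v2 - 27) :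
    PowerSeries.coeff m (psi v2 a) = (if m = v2 - 9 then 1 else 0) := by
  rw [psi, map_add, coeff_X_pow, coeff_S2_case2 h18 h3 hall hm, add_zero]

include h18 h3 hall in
lemma w0 {m : ℕ} (hm : m ≤ 2 * v2 - 10) : PowerSeries.coeff m (phi2 v2 a ^ 3)
    = (if m = 27 then 1 else 0) + 3 * (if m = v2 + 9 then 1 else 0) := by
  rw [coeff_cube h18 h3, coeff_psicube_low h18 h3 a (by omega)]
  have t3 : (if 9 ≤ m then PowerSeries.coeff (m - 9) (psi v2 a * psi v2 a) else 0) = 0 := by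
    by_cases h9 : 9 ≤ m
    · rw [if_pos h9, coeff_psisq_low h18 h3 a (by omega)]
    · rw [if_neg h9]
  rw [t3]
  by_cases h18m : 18 ≤ m
  · rw [if_pos h18m, coeff_psi_case2 h18 h3 hall (by omega)]
    by_cases hv : m = v2 + 9
    · rw [if_pos (by omega : m - 18 = v2 - 9), if_pos hv]; ring
    · rw [if_neg (by omega : ¬ (m - 18 = v2 - 9)), if_neg hv]; ring
  · rw [if_neg h18m, if_neg (by omega : ¬ (m = v2 + 9))]; ring

include h18 h3 hall in
lemma c_low2 {m : ℕ} (hm : m < 2 * v2 - 27) : PowerSeries.coeff m (phi2 v2 a)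
    = (if m = 9 then 1 else 0) + (if m = v2 - 9 then 1 else 0) := by
  rw [coeff_phi2, coeff_S2_case2 h18 h3 hall hm, add_zero]

include h18 h3 in
lemma c_27 : PowerSeries.coeff (2 * v2 - 27) (phi2 v2 a) = a (-9) := by
  have hE99 : (E v2 (-9) : ℤ) = 2 * (v2 : ℤ) - 27 := by
    have := (hE h18 h3 (j := -9) (by unfold J0; omega) (by omega)).1
    omega
  rw [coeff_phi2, if_neg (by omega), if_neg (by omega),
    show 2 * v2 - 27 = E v2 (-9) by omega,
    coeff_S2_E h18 h3 a (by unfold J0; omega) (by omega)]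
  ring

end Case2

/-- The Φ witness series (case 2). -/
noncomputable def Fw4 (v2 : ℕ) (a : ℤ → ℂ) : PowerSeries ℂ :=
  PowerSeries.C ((v2 : ℂ) - 18) * (phi2 v2 a ^ 2 * derivativeFun (phi2 v2 a))
    + PowerSeries.C 162 * (PowerSeries.X ^ 17 * phi2 v2 a)
    + PowerSeries.C (-(v2 : ℂ)) * (PowerSeries.X ^ 18 * derivativeFun (phi2 v2 a))

section Case2b
variable {v2 : ℕ} {a : ℤ → ℂ} (h18 : 18 < v2) (h3 : ¬ (3 ∣ v2))
variable (hall : ∀ j : ℤ, J0 v2 ≤ j → j ≤ -9 →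
  (if j = -9 then 1 + 2 * a (-9) else a j) = 0)

lemma coeff_Fw4 (k : ℕ) : PowerSeries.coeff k (Fw4 v2 a)
    = ((v2 : ℂ) - 18) * (PowerSeries.coeff (k + 1) (phi2 v2 a ^ 3) * ((k : ℂ) + 1) / 3)
      + 162 * (if 17 ≤ k then PowerSeries.coeff (k - 17) (phi2 v2 a) else 0)
      + (-(v2 : ℂ)) * (if 18 ≤ k then
          PowerSeries.coeff (k - 18 + 1) (phi2 v2 a) * (((k - 18 : ℕ) : ℂ) + 1) else 0) := by
  rw [Fw4, map_add, map_add, coeff_C_mul, coeff_C_mul, coeff_C_mul, coeff_sqd,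
    coeff_X_pow_mul', coeff_X_pow_mul']
  by_cases h18k : 18 ≤ k
  · rw [if_pos h18k, if_pos h18k, coeff_dF]
  · rw [if_neg h18k, if_neg h18k]

include h18 h3 hall in
lemma fw4_low : ∀ k, k < 2 * v2 - 10 → PowerSeries.coeff k (Fw4 v2 a) = 0 := by
  intro k hk
  rw [coeff_Fw4, w0 h18 h3 hall (by omega)]
  by_cases h26 : k = 26
  · subst h26
    rw [show (26 : ℕ) - 17 = 9 by norm_num, show (26 : ℕ) - 18 + 1 = 9 by norm_num,
      show (26 : ℕ) - 18 = 8 by norm_num,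
      if_pos rfl, if_neg (by omega : ¬ ((26 : ℕ) + 1 = v2 + 9)),
      if_pos (by omega : (17 : ℕ) ≤ 26), if_pos (by omega : (18 : ℕ) ≤ 26),
      c_low2 h18 h3 hall (by omega : (9 : ℕ) < 2 * v2 - 27),
      if_pos rfl, if_neg (by omega : ¬ ((9 : ℕ) = v2 - 9))]
    norm_num
    ring
  · by_cases hv8 : k = v2 + 8
    · subst hv8
      rw [show v2 + 8 - 17 = v2 - 9 by omega, show v2 + 8 - 18 + 1 = v2 - 9 by omega,
        show v2 + 8 - 18 = v2 - 10 by omega,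
        if_neg (by omega : ¬ (v2 + 8 + 1 = 27)), if_pos (by omega : v2 + 8 + 1 = v2 + 9),
        if_pos (by omega : 17 ≤ v2 + 8), if_pos (by omega : 18 ≤ v2 + 8),
        c_low2 h18 h3 hall (by omega : v2 - 9 < 2 * v2 - 27),
        if_neg (by omega : ¬ (v2 - 9 = 9)), if_pos rfl,
        castsub (by omega : 10 ≤ v2)]
      push_cast
      ring
    · rw [if_neg (by omega : ¬ (k + 1 = 27)), if_neg (by omega : ¬ (k + 1 = v2 + 9))]
      have t2 : (if 17 ≤ k then PowerSeries.coeff (k - 17) (phi2 v2 a) else 0) = 0 := by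
        by_cases h17 : 17 ≤ k
        · rw [if_pos h17, c_low2 h18 h3 hall (by omega), if_neg (by omega),
            if_neg (by omega)]
          ring
        · rw [if_neg h17]
      have t3 : (if 18 ≤ k then
          PowerSeries.coeff (k - 18 + 1) (phi2 v2 a) * (((k - 18 : ℕ) : ℂ) + 1) else 0)
            = 0 := by
        by_cases h18k : 18 ≤ k
        · rw [if_pos h18k, c_low2 h18 h3 hall (by omega), if_neg (by omega),
            if_neg (by omega)]
          ring
        · rw [if_neg h18k]
      rw [t2, t3]
      ring

include h18 h3 hall in
lemma fw4_top : PowerSeries.coeff (2 * v2 - 10) (Fw4 v2 a)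
    = 2 * (v2 : ℂ) * ((v2 : ℂ) - 18) := by
  have h9 := ha9 h18 h3 hall
  rw [coeff_Fw4, show 2 * v2 - 10 + 1 = 2 * v2 - 9 by omega, w_top h18 h3,
    if_pos (by omega), if_pos (by omega), show 2 * v2 - 10 - 17 = 2 * v2 - 27 by omega,
    show 2 * v2 - 10 - 18 + 1 = 2 * v2 - 27 by omega,
    show 2 * v2 - 10 - 18 = 2 * v2 - 28 by omega, c_27 h18 h3, h9,
    castsub (by omega : 10 ≤ 2 * v2), castsub (by omega : 28 ≤ 2 * v2)]
  push_cast
  field_simp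
  ring

include h18 h3 hall in
lemma fw4_top_ne : PowerSeries.coeff (2 * v2 - 10) (Fw4 v2 a) ≠ 0 := by
  rw [fw4_top h18 h3 hall]
  have h1 : (v2 : ℂ) ≠ 0 := by
    exact_mod_cast (by omega : (v2 : ℕ) ≠ 0)
  have h2 : (v2 : ℂ) - 18 ≠ 0 := by
    intro hc
    have : (v2 : ℂ) = ((18 : ℕ) : ℂ) := by push_cast; linear_combination hc
    have : (v2 : ℕ) = 18 := by exact_mod_cast this
    omega
  exact mul_ne_zero (mul_ne_zero two_ne_zero h1) h2

end Case2b

/-- exponent pairs -/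
noncomputable def mk2 (p q : ℕ) : Fin 2 →₀ ℕ := Finsupp.single 0 p + Finsupp.single 1 q

lemma mk2_0 (p q : ℕ) : mk2 p q 0 = p := by
  simp [mk2, Finsupp.single_apply]

lemma mk2_1 (p q : ℕ) : mk2 p q 1 = q := by
  simp [mk2, Finsupp.single_apply]

section Sub2
variable {v2 : ℕ} {a : ℤ → ℂ} (h18 : 18 < v2) (h3 : ¬ (3 ∣ v2))

include h18 h3 in
lemma phi2_lt9 : ∀ m, m < 9 → PowerSeries.coeff m (phi2 v2 a) = 0 := by
  intro m hm
  rw [coeff_phi2_low h18 h3 a (by omega), if_neg (by omega)]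

include h18 h3 in
lemma sub2_mk2 (p q : ℕ) (r : ℂ) :
    sub2 ((PowerSeries.X : PowerSeries ℂ) ^ 6) (phi2 v2 a)
        (MvPowerSeries.monomial (mk2 p q) r)
      = PowerSeries.C r * ((PowerSeries.X : PowerSeries ℂ) ^ 6) ^ p * phi2 v2 a ^ q := by
  rw [sub2_monomial (phi2_lt9 h18 h3), mk2_0, mk2_1]

lemma dX6 : derivativeFun ((PowerSeries.X : PowerSeries ℂ) ^ 6)
    = PowerSeries.C 6 * PowerSeries.X ^ 5 := by
  rw [show ((PowerSeries.X : PowerSeries ℂ) ^ 6) = PowerSeries.X ^ (5 + 1) from rfl, dXpow]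
  norm_num

lemma deriv_sub (f g : PowerSeries ℂ) :
    derivativeFun (f - g) = derivativeFun f - derivativeFun g := by
  have h := derivativeFun_add (f - g) g
  rw [sub_add_cancel] at h
  linear_combination -h

include h18 h3 in
lemma mem_dv {A B : MvPowerSeries (Fin 2) ℂ} {F : PowerSeries ℂ} {n k : ℕ}
    (hF : sub2 ((PowerSeries.X : PowerSeries ℂ) ^ 6) (phi2 v2 a) A
            * derivativeFun ((PowerSeries.X : PowerSeries ℂ) ^ 6)
          + sub2 ((PowerSeries.X : PowerSeries ℂ) ^ 6) (phi2 v2 a) B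
            * derivativeFun (phi2 v2 a) = F)
    (hlow : ∀ m, m < k → PowerSeries.coeff m F = 0)
    (htop : PowerSeries.coeff k F ≠ 0) (hn : n = k + 1) :
    n ∈ diffValues ((PowerSeries.X : PowerSeries ℂ) ^ 6) (phi2 v2 a) := by
  obtain ⟨hne, hord⟩ := order_witness hlow htop
  refine ⟨A, B, ?_, ?_⟩
  · rw [hF]; exact hne
  · rw [hF, hord, hn]

include h18 h3 in
lemma ne18 : (18 : ℂ) - (v2 : ℂ) ≠ 0 := by
  intro hc
  have : ((18 : ℕ) : ℂ) = (v2 : ℂ) := by push_cast; linear_combination hc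
  have : (18 : ℕ) = v2 := by exact_mod_cast this
  omega

include h18 h3 in
lemma memw1 : (v2 - 4 + 1) ∈ diffValues ((PowerSeries.X : PowerSeries ℂ) ^ 6) (phi2 v2 a) := by
  refine mem_dv h18 h3 (A := MvPowerSeries.monomial (mk2 0 1) 3)
    (B := MvPowerSeries.monomial (mk2 1 0) (-2))
    (F := PowerSeries.C 2 * Nform 9 (-1) (phi2 v2 a)) ?_ ?_ ?_ rfl
  · rw [sub2_mk2 h18 h3, sub2_mk2 h18 h3, dX6, Nform]
    simp only [map_neg, map_ofNat, map_one]
    ring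
  · intro m hm
    rw [coeff_C_mul, Fw1_low a h18 h3 m hm, mul_zero]
  · rw [coeff_C_mul, Fw1_top a h18 h3]
    exact mul_ne_zero two_ne_zero (ne18 h18 h3)

include h18 h3 in
lemma memw2 : (v2 + 2 + 1) ∈ diffValues ((PowerSeries.X : PowerSeries ℂ) ^ 6) (phi2 v2 a) := by
  refine mem_dv h18 h3 (A := MvPowerSeries.monomial (mk2 1 1) 3)
    (B := MvPowerSeries.monomial (mk2 2 0) (-2))
    (F := PowerSeries.C 2 * (PowerSeries.X ^ 6 * Nform 9 (-1) (phi2 v2 a))) ?_ ?_ ?_ rfl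
  · rw [sub2_mk2 h18 h3, sub2_mk2 h18 h3, dX6, Nform]
    simp only [map_neg, map_ofNat, map_one]
    ring
  · intro m hm
    rw [coeff_C_mul, coeff_X_pow_mul']
    by_cases h6 : 6 ≤ m
    · rw [if_pos h6, Fw1_low a h18 h3 (m - 6) (by omega), mul_zero]
    · rw [if_neg h6, mul_zero]
  · rw [coeff_C_mul, coeff_X_pow_mul', if_pos (by omega : 6 ≤ v2 + 2),
      show v2 + 2 - 6 = v2 - 4 by omega, Fw1_top a h18 h3]
    exact mul_ne_zero two_ne_zero (ne18 h18 h3)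

include h18 h3 in
lemma memw5 : (2 * v2 - 4 + 1) ∈ diffValues ((PowerSeries.X : PowerSeries ℂ) ^ 6)
    (phi2 v2 a) := by
  refine mem_dv h18 h3 (A := MvPowerSeries.monomial (mk2 0 3) 9
      + MvPowerSeries.monomial (mk2 3 1) (-9))
    (B := MvPowerSeries.monomial (mk2 4 0) 6 + MvPowerSeries.monomial (mk2 1 2) (-6))
    (F := PowerSeries.C 2 * Nform 27 (-1) (Gser v2 a)) ?_ ?_ ?_ rfl
  · rw [sub2_add, sub2_add, sub2_mk2 h18 h3, sub2_mk2 h18 h3, sub2_mk2 h18 h3,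
      sub2_mk2 h18 h3, dX6, Nform, Gser, deriv_sub, deriv_cube]
    have hd : derivativeFun (PowerSeries.C 3 * (PowerSeries.X ^ 18 * phi2 v2 a))
        = PowerSeries.C 3 * (PowerSeries.X ^ 18 * derivativeFun (phi2 v2 a)
            + phi2 v2 a * (PowerSeries.C 18 * PowerSeries.X ^ 17)) := by
      rw [← smul_eq_C_mul, derivativeFun_smul, derivativeFun_mul,
        show ((PowerSeries.X : PowerSeries ℂ) ^ 18) = PowerSeries.X ^ (17 + 1) from rfl,
        dXpow, smul_eq_C_mul]
      simp only [smul_eq_mul]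
      norm_num
    rw [hd]
    simp only [map_neg, map_ofNat, map_one]
    ring
  · intro m hm
    rw [coeff_C_mul, Fw5_low a h18 h3 m hm, mul_zero]
  · rw [coeff_C_mul, Fw5_top a h18 h3]
    refine mul_ne_zero two_ne_zero (mul_ne_zero ?_ three_ne_zero)
    intro hc
    have : ((36 : ℕ) : ℂ) = ((2 * v2 : ℕ) : ℂ) := by push_cast; linear_combination hc
    have : (36 : ℕ) = 2 * v2 := by exact_mod_cast this
    omega

include h18 h3 in
lemma memw6 : (2 * v2 + 2 + 1) ∈ diffValues ((PowerSeries.X : PowerSeries ℂ) ^ 6)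
    (phi2 v2 a) := by
  refine mem_dv h18 h3 (A := MvPowerSeries.monomial (mk2 1 3) 9
      + MvPowerSeries.monomial (mk2 4 1) (-9))
    (B := MvPowerSeries.monomial (mk2 5 0) 6 + MvPowerSeries.monomial (mk2 2 2) (-6))
    (F := PowerSeries.C 2 * (PowerSeries.X ^ 6 * Nform 27 (-1) (Gser v2 a))) ?_ ?_ ?_ rfl
  · rw [sub2_add, sub2_add, sub2_mk2 h18 h3, sub2_mk2 h18 h3, sub2_mk2 h18 h3,
      sub2_mk2 h18 h3, dX6, Nform, Gser, deriv_sub, deriv_cube]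
    have hd : derivativeFun (PowerSeries.C 3 * (PowerSeries.X ^ 18 * phi2 v2 a))
        = PowerSeries.C 3 * (PowerSeries.X ^ 18 * derivativeFun (phi2 v2 a)
            + phi2 v2 a * (PowerSeries.C 18 * PowerSeries.X ^ 17)) := by
      rw [← smul_eq_C_mul, derivativeFun_smul, derivativeFun_mul,
        show ((PowerSeries.X : PowerSeries ℂ) ^ 18) = PowerSeries.X ^ (17 + 1) from rfl,
        dXpow, smul_eq_C_mul]
      simp only [smul_eq_mul]
      norm_num
    rw [hd]
    simp only [map_neg, map_ofNat, map_one]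
    ring
  · intro m hm
    rw [coeff_C_mul, coeff_X_pow_mul']
    by_cases h6 : 6 ≤ m
    · rw [if_pos h6, Fw5_low a h18 h3 (m - 6) (by omega), mul_zero]
    · rw [if_neg h6, mul_zero]
  · rw [coeff_C_mul, coeff_X_pow_mul', if_pos (by omega : 6 ≤ 2 * v2 + 2),
      show 2 * v2 + 2 - 6 = 2 * v2 - 4 by omega, Fw5_top a h18 h3]
    refine mul_ne_zero two_ne_zero (mul_ne_zero ?_ three_ne_zero)
    intro hc
    have : ((36 : ℕ) : ℂ) = ((2 * v2 : ℕ) : ℂ) := by push_cast; linear_combination hc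
    have : (36 : ℕ) = 2 * v2 := by exact_mod_cast this
    omega

end Sub2

section Mem34
variable {v2 : ℕ} {a : ℤ → ℂ} (h18 : 18 < v2) (h3 : ¬ (3 ∣ v2))

section M3
variable {js : ℤ} (hjs1 : J0 v2 ≤ js) (hjs9 : js ≤ -9)
variable (hmin : ∀ j : ℤ, J0 v2 ≤ j → j ≤ -4 → a j ≠ 0 → js ≤ j)
variable (hP : (if js = -9 then 1 + 2 * a (-9) else a js) ≠ 0)

include h18 h3 hjs1 hjs9 hmin hP in
lemma memw3 : (E v2 js + 14 + 1) ∈ diffValues ((PowerSeries.X : PowerSeries ℂ) ^ 6)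
    (phi2 v2 a) := by
  refine mem_dv h18 h3 (A := MvPowerSeries.monomial (mk2 0 2) (v2 : ℂ)
      + MvPowerSeries.monomial (mk2 3 0) (18 - (v2 : ℂ)))
    (B := MvPowerSeries.monomial (mk2 1 1) (-12))
    (F := PowerSeries.C 6 * Fw3 v2 a) ?_ ?_ ?_ rfl
  · rw [sub2_add, sub2_mk2 h18 h3, sub2_mk2 h18 h3, sub2_mk2 h18 h3, dX6, Fw3, Nform,
      deriv_sq]
    simp only [map_neg, map_ofNat, map_one]
    ring
  · intro m hm
    rw [coeff_C_mul, fw3_low h18 h3 hjs1 hjs9 hmin m hm, mul_zero]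
  · rw [coeff_C_mul]
    exact mul_ne_zero (by norm_num) (fw3_top h18 h3 hjs1 hjs9 hmin hP)

end M3

section M4
variable (hall : ∀ j : ℤ, J0 v2 ≤ j → j ≤ -9 →
  (if j = -9 then 1 + 2 * a (-9) else a j) = 0)

include h18 h3 hall in
lemma memw4 : (2 * v2 - 10 + 1) ∈ diffValues ((PowerSeries.X : PowerSeries ℂ) ^ 6)
    (phi2 v2 a) := by
  refine mem_dv h18 h3 (A := MvPowerSeries.monomial (mk2 2 1) 27)
    (B := MvPowerSeries.monomial (mk2 0 2) ((v2 : ℂ) - 18)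
      + MvPowerSeries.monomial (mk2 3 0) (-(v2 : ℂ)))
    (F := Fw4 v2 a) ?_ ?_ ?_ rfl
  · rw [sub2_add, sub2_mk2 h18 h3, sub2_mk2 h18 h3, sub2_mk2 h18 h3, dX6, Fw4]
    simp only [map_neg, map_ofNat, map_one]
    ring
  · exact fw4_low h18 h3 hall
  · exact fw4_top_ne h18 h3 hall

end M4
end Mem34

end LG692

/-- For the normal-form parameterization
`(T⁶, T⁹ + T^{v₂-9} + ∑_{j=-⌊v₂/3⌋-3}^{-4} aⱼ T^{2v₂+3j})` with `v₂ > 18`, `3 ∤ v₂`,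
the set `Λ \ ⟨6, 9, v₂⟩` has at least `5` elements. -/
theorem lambda_minus_gamma_6_9_v2_card (v2 : ℕ) (h18 : 18 < v2) (h3 : ¬ (3 ∣ v2))
    (a : ℤ → ℂ) (φ₁ φ₂ : PowerSeries ℂ)
    (hφ₁ : φ₁ = PowerSeries.X ^ 6)
    (hφ₂ : φ₂ = PowerSeries.X ^ 9 + PowerSeries.X ^ (v2 - 9) +
      ∑ j ∈ Finset.Icc (-((v2 / 3 : ℕ) : ℤ) - 3) (-4),
        PowerSeries.C (a j) * PowerSeries.X ^ (2 * (v2 : ℤ) + 3 * j).toNat) :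
    ∃ S : Finset ℕ, 5 ≤ S.card ∧
      ↑S ⊆ diffValues φ₁ φ₂ \ (AddSubmonoid.closure ({6, 9, v2} : Set ℕ) : Set ℕ) := by
  subst hφ₁
  subst hφ₂
  have hphi : PowerSeries.X ^ 9 + PowerSeries.X ^ (v2 - 9) +
      ∑ j ∈ Finset.Icc (-((v2 / 3 : ℕ) : ℤ) - 3) (-4),
        PowerSeries.C (a j) * PowerSeries.X ^ (2 * (v2 : ℤ) + 3 * j).toNat
      = LG692.phi2 v2 a := by
    rw [LG692.phi2_eq, LG692.S2]
  rw [hphi]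
  have w1 := LG692.memw1 h18 h3 (a := a)
  rw [show v2 - 4 + 1 = v2 - 3 by omega] at w1
  have w2 := LG692.memw2 h18 h3 (a := a)
  rw [show v2 + 2 + 1 = v2 + 3 by omega] at w2
  have w5 := LG692.memw5 h18 h3 (a := a)
  rw [show 2 * v2 - 4 + 1 = 2 * v2 - 3 by omega] at w5
  have w6 := LG692.memw6 h18 h3 (a := a)
  rw [show 2 * v2 + 2 + 1 = 2 * v2 + 3 by omega] at w6
  have hthird : ∃ n₃ : ℕ,
      n₃ ∈ diffValues ((PowerSeries.X : PowerSeries ℂ) ^ 6) (LG692.phi2 v2 a) ∧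
        v2 + 3 < n₃ ∧ n₃ < 2 * v2 - 3 ∧ n₃ % 3 = (2 * v2) % 3 := by
    by_cases hcase : ∀ j : ℤ, LG692.J0 v2 ≤ j → j ≤ -9 →
        (if j = -9 then 1 + 2 * a (-9) else a j) = 0
    · exact ⟨2 * v2 - 10 + 1, LG692.memw4 h18 h3 hcase, by omega, by omega, by omega⟩
    · push_neg at hcase
      obtain ⟨j0, hj01, hj09, hj0P⟩ := hcase
      have hTne : ((Finset.Icc (LG692.J0 v2) (-9 : ℤ)).filter
          (fun j => (if j = -9 then 1 + 2 * a (-9) else a j) ≠ 0)).Nonempty := by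
        refine ⟨j0, ?_⟩
        rw [Finset.mem_filter, Finset.mem_Icc]
        exact ⟨⟨hj01, hj09⟩, hj0P⟩
      set js := ((Finset.Icc (LG692.J0 v2) (-9 : ℤ)).filter
          (fun j => (if j = -9 then 1 + 2 * a (-9) else a j) ≠ 0)).min' hTne with hjs
      have hjsT := Finset.min'_mem _ hTne
      rw [← hjs, Finset.mem_filter, Finset.mem_Icc] at hjsT
      obtain ⟨⟨hjs1, hjs9⟩, hjsP⟩ := hjsT
      have hmin : ∀ j : ℤ, LG692.J0 v2 ≤ j → j ≤ -4 → a j ≠ 0 → js ≤ j := by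
        intro j h1 h4 ha
        rcases le_or_gt j (-9) with hj | hj
        · by_cases hj9 : j = -9
          · omega
          · refine Finset.min'_le _ j ?_
            rw [Finset.mem_filter, Finset.mem_Icc, if_neg hj9]
            exact ⟨⟨h1, hj⟩, ha⟩
        · omega
      have hEf := LG692.hE h18 h3 hjs1 (show js ≤ -4 by omega)
      refine ⟨LG692.E v2 js + 14 + 1,
        LG692.memw3 h18 h3 hjs1 hjs9 hmin hjsP, by omega, by omega, by omega⟩
  obtain ⟨n₃, hw3, hb1, hb2, hmod3⟩ := hthird
  refine ⟨{v2 - 3, v2 + 3, n₃, 2 * v2 - 3, 2 * v2 + 3}, ?_, ?_⟩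
  · have e1 : v2 - 3 ∉ ({v2 + 3, n₃, 2 * v2 - 3, 2 * v2 + 3} : Finset ℕ) := by
      simp only [Finset.mem_insert, Finset.mem_singleton]
      push_neg
      omega
    have e2 : v2 + 3 ∉ ({n₃, 2 * v2 - 3, 2 * v2 + 3} : Finset ℕ) := by
      simp only [Finset.mem_insert, Finset.mem_singleton]
      push_neg
      omega
    have e3 : n₃ ∉ ({2 * v2 - 3, 2 * v2 + 3} : Finset ℕ) := by
      simp only [Finset.mem_insert, Finset.mem_singleton]
      push_neg
      omega
    have e4 : 2 * v2 - 3 ∉ ({2 * v2 + 3} : Finset ℕ) := by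
      simp only [Finset.mem_singleton]
      omega
    rw [Finset.card_insert_of_notMem e1, Finset.card_insert_of_notMem e2,
      Finset.card_insert_of_notMem e3, Finset.card_insert_of_notMem e4,
      Finset.card_singleton]
  · intro x hx
    simp only [Finset.coe_insert, Set.mem_insert_iff, Finset.coe_singleton,
      Set.mem_singleton_iff] at hx
    rcases hx with h | h | h | h | h <;> subst h
    · exact ⟨w1, LG692.ngA h18 h3 (by omega) (Or.inl (by omega))⟩
    · exact ⟨w2, LG692.ngA h18 h3 (by omega) (Or.inr (by omega))⟩
    · exact ⟨hw3, LG692.ngB h18 h3 (by omega) (Or.inl (by omega))⟩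
    · exact ⟨w5, LG692.ngB h18 h3 (by omega) (Or.inl (by omega))⟩
    · exact ⟨w6, LG692.ngB h18 h3 (by omega) (Or.inr (by omega))⟩
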